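/- If G is a connected bipartite graph, then every fault-tolerant metric generator of G is a fault-tolerant edge metric generator of G. -/

import Mathlib

open SimpleGraph

variable {V : Type*}

/-- `X` is a metric generator of `G`: every pair of distinct vertices is resolved
by some vertex of `X`. -/
def isMetricGen (G : SimpleGraph V) (X : Set V) : Prop :=
  ∀ x y : V, x ≠ y → ∃ u ∈ X, G.dist x u ≠ G.dist y u

/-- `F` is a fault-tolerant metric generator: `F` is a metric generator and remains
one after removing any single vertex of `F`. -/
def isFTMetricGen (G : SimpleGraph V) (F : Set V) : Prop :=
  isMetricGen G F ∧ ∀ u ∈ F, isMetricGen G (F \ {u})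

/-- The metric dimension: minimum cardinality of a (finite) metric generator. -/
noncomputable def metricDim (G : SimpleGraph V) : ℕ :=
  sInf {n : ℕ | ∃ X : Set V, X.Finite ∧ isMetricGen G X ∧ X.ncard = n}

/-- The fault-tolerant metric dimension. -/
noncomputable def ftMetricDim (G : SimpleGraph V) : ℕ :=
  sInf {n : ℕ | ∃ F : Set V, F.Finite ∧ isFTMetricGen G F ∧ F.ncard = n}

/-- Distance from a vertex `w` to an (unordered) edge `e = xy`:
`d(w,e) = min (d(w,x)) (d(w,y))`. -/
noncomputable def edgeDist (G : SimpleGraph V) (w : V) (e : Sym2 V) : ℕ :=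
  Sym2.lift ⟨fun x y => min (G.dist w x) (G.dist w y), fun _ _ => min_comm _ _⟩ e

/-- `S` is an edge metric generator of `G`: every pair of distinct edges is
resolved by some vertex of `S`. -/
def isEdgeMetricGen (G : SimpleGraph V) (S : Set V) : Prop :=
  ∀ e ∈ G.edgeSet, ∀ f ∈ G.edgeSet, e ≠ f → ∃ w ∈ S, edgeDist G w e ≠ edgeDist G w f

/-- `F` is a fault-tolerant edge metric generator. -/
def isFTEdgeMetricGen (G : SimpleGraph V) (F : Set V) : Prop :=
  isEdgeMetricGen G F ∧ ∀ u ∈ F, isEdgeMetricGen G (F \ {u})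

/-- The edge metric dimension. -/
noncomputable def edgeMetricDim (G : SimpleGraph V) : ℕ :=
  sInf {n : ℕ | ∃ S : Set V, S.Finite ∧ isEdgeMetricGen G S ∧ S.ncard = n}

/-- The fault-tolerant edge metric dimension. -/
noncomputable def ftEdgeMetricDim (G : SimpleGraph V) : ℕ :=
  sInf {n : ℕ | ∃ F : Set V, F.Finite ∧ isFTEdgeMetricGen G F ∧ F.ncard = n}

/-- An edge metric basis: an edge metric generator of minimum cardinality. -/
def isEdgeMetricBasis (G : SimpleGraph V) (S : Set V) : Prop :=
  isEdgeMetricGen G S ∧ ∀ S' : Set V, isEdgeMetricGen G S' → S.ncard ≤ S'.ncard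

/-- `u` and `v` are (distinct) twins: `N(u) = N(v)` or `N[u] = N[v]`. -/
def isTwinPair (G : SimpleGraph V) (u v : V) : Prop :=
  u ≠ v ∧ (G.neighborSet u = G.neighborSet v ∨
    insert u (G.neighborSet u) = insert v (G.neighborSet v))

/-- `u` is a twin vertex: it has a twin distinct from itself. -/
def isTwinVertex (G : SimpleGraph V) (u : V) : Prop :=
  ∃ v, isTwinPair G u v

/-- A twin set: a maximal set of vertices in which every two vertices are twins. -/
def isTwinSet (G : SimpleGraph V) (T : Set V) : Prop :=
  (∀ u ∈ T, ∀ v ∈ T, u ≠ v → isTwinPair G u v) ∧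
  ∀ T' : Set V, T ⊆ T' → (∀ u ∈ T', ∀ v ∈ T', u ≠ v → isTwinPair G u v) → T' = T

/-- Adjacency of the generalized Sierpiński graph `S_G^r` over a base graph `G`
on `[n]`.  A vertex is a string `x = x_{r-1} … x_0` (index `r-1` is the leftmost,
most significant coordinate). -/
def sierpinskiAdj {n : ℕ} (G : SimpleGraph (Fin n)) (r : ℕ) (x y : Fin r → Fin n) : Prop :=
  ∃ t : Fin r, (∀ i : Fin r, t < i → x i = y i) ∧
    (x t ≠ y t ∧ G.Adj (x t) (y t)) ∧
    ∀ i : Fin r, i < t → x i = y t ∧ y i = x t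

/-- The generalized Sierpiński graph `S_G^r`. -/
def sierpinski {n : ℕ} (G : SimpleGraph (Fin n)) (r : ℕ) :
    SimpleGraph (Fin r → Fin n) where
  Adj := sierpinskiAdj G r
  symm := by
    constructor
    rintro x y ⟨t, h1, ⟨hne, hadj⟩, h3⟩
    exact ⟨t, fun i hi => (h1 i hi).symm, ⟨hne.symm, hadj.symm⟩,
      fun i hi => ⟨(h3 i hi).2, (h3 i hi).1⟩⟩
  loopless := by
    constructor
    rintro x ⟨t, _, ⟨hne, _⟩, _⟩
    exact hne rfl

/-- The 4-cycle on `{0,1,2,3}` with edges `01, 12, 23, 30`. -/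
def C4 : SimpleGraph (Fin 4) := SimpleGraph.fromRel (fun x y => y = x + 1)

/-- The hypercube `Q_d`: binary strings of length `d`, adjacent iff they differ
in exactly one coordinate. -/
def hypercube (d : ℕ) : SimpleGraph (Fin d → Fin 2) where
  Adj x y := ∃! i, x i ≠ y i
  symm := by
    constructor
    rintro x y ⟨i, hi, hu⟩
    exact ⟨i, hi.symm, fun j hj => hu j hj.symm⟩
  loopless := by
    constructor
    rintro x ⟨i, hi, _⟩
    exact hi rfl

private lemma fin2_iff {a b c : Fin 2} (h : a ≠ b) : a = c ↔ ¬ b = c := by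
  revert h; revert a b c; decide

private lemma fin2_eq {a b c : Fin 2} (h : (a = b ↔ a = c)) : b = c := by
  revert h; revert a b c; decide

private lemma fin2_eq2 {a b c d : Fin 2} (h1 : a = c) (h2 : a ≠ b) (h3 : c ≠ d) : b = d := by
  revert h1 h2 h3; revert a b c d; decide

private lemma fin2_eq3 {a b c : Fin 2} (h1 : ¬ a = b) (h2 : b ≠ c) : a = c := by
  revert h1 h2; revert a b c; decide

private lemma walk_parity {G : SimpleGraph V} (C : G.Coloring (Fin 2)) {u v : V}
    (p : G.Walk u v) : C u = C v ↔ Even p.length := by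
  induction p with
  | nil => simp
  | cons h p ih =>
    rw [Walk.length_cons, Nat.even_add_one, ← ih]
    exact fin2_iff (C.valid h)

private lemma dist_parity {G : SimpleGraph V} (hconn : G.Connected)
    (C : G.Coloring (Fin 2)) (u v : V) : Even (G.dist u v) ↔ C u = C v := by
  obtain ⟨p, hp⟩ := hconn.exists_walk_length_eq_dist u v
  rw [← hp]; exact (walk_parity C p).symm

private lemma adj_dist {G : SimpleGraph V} (hconn : G.Connected)
    (C : G.Coloring (Fin 2)) {x y : V} (hxy : G.Adj x y) (w : V) :
    G.dist w y = G.dist w x + 1 ∨ G.dist w x = G.dist w y + 1 := by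
  have h1 : G.dist w y ≤ G.dist w x + 1 := by
    calc G.dist w y ≤ G.dist w x + G.dist x y := hconn.dist_triangle
    _ = G.dist w x + 1 := by rw [dist_eq_one_iff_adj.mpr hxy]
  have h2 : G.dist w x ≤ G.dist w y + 1 := by
    calc G.dist w x ≤ G.dist w y + G.dist y x := hconn.dist_triangle
    _ = G.dist w y + 1 := by rw [dist_eq_one_iff_adj.mpr hxy.symm]
  have hne : G.dist w x ≠ G.dist w y := fun h =>
    C.valid hxy (fin2_eq ((dist_parity hconn C w x).symm.trans
      ((iff_of_eq (congrArg Even h)).trans (dist_parity hconn C w y))))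
  omega

private lemma parmod {G : SimpleGraph V} (hconn : G.Connected)
    (C : G.Coloring (Fin 2)) {x u : V} (hcx : C x = C u) (w : V) :
    G.dist w x % 2 = 0 ↔ G.dist w u % 2 = 0 := by
  rw [← Nat.even_iff, ← Nat.even_iff, dist_parity hconn C w x,
    dist_parity hconn C w u, hcx]

private lemma half {G : SimpleGraph V} (hconn : G.Connected) (C : G.Coloring (Fin 2))
    {x y u v : V} (hxy : G.Adj x y) (huv : G.Adj u v) (hcx : C x = C u)
    {X : Set V} (hX : isMetricGen G X)
    (h : ∀ w ∈ X, min (G.dist w x) (G.dist w y) = min (G.dist w u) (G.dist w v)) :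
    x = u ∧ y = v := by
  have hcy : C y = C v := fin2_eq2 hcx (C.valid hxy) (C.valid huv)
  have key : ∀ w ∈ X, G.dist w x = G.dist w u ∧ G.dist w y = G.dist w v := by
    intro w hw
    have hab := adj_dist hconn C hxy w
    have hpq := adj_dist hconn C huv w
    have p1 := parmod hconn C hcx w
    have p2 := parmod hconn C hcy w
    have hm := h w hw
    omega
  constructor
  · by_contra hne
    obtain ⟨w, hw, hd⟩ := hX x u hne
    exact hd ((dist_comm (G:=G)).trans ((key w hw).1.trans (dist_comm (G:=G))))
  · by_contra hne
    obtain ⟨w, hw, hd⟩ := hX y v hne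
    exact hd ((dist_comm (G:=G)).trans ((key w hw).2.trans (dist_comm (G:=G))))

private lemma gen_to_edge {G : SimpleGraph V} (hconn : G.Connected)
    (C : G.Coloring (Fin 2)) {X : Set V} (hX : isMetricGen G X) :
    isEdgeMetricGen G X := by
  intro e he f hf hef
  obtain ⟨⟨x, y⟩, rfl⟩ := e.exists_rep
  obtain ⟨⟨u, v⟩, rfl⟩ := f.exists_rep
  have hxy : G.Adj x y := he
  have huv : G.Adj u v := hf
  by_contra hcon
  push_neg at hcon
  have hmin : ∀ w ∈ X, min (G.dist w x) (G.dist w y) = min (G.dist w u) (G.dist w v) :=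
    fun w hw => hcon w hw
  by_cases hcx : C x = C u
  · obtain ⟨rfl, rfl⟩ := half hconn C hxy huv hcx hX hmin
    exact hef rfl
  · have hcv : C x = C v := fin2_eq3 hcx (C.valid huv)
    obtain ⟨rfl, rfl⟩ := half hconn C hxy huv.symm hcv hX
      (fun w hw => (hmin w hw).trans (min_comm _ _))
    exact hef (Sym2.eq_swap)

/-- In a connected bipartite graph, every fault-tolerant metric
generator is a fault-tolerant edge metric generator. -/
theorem isFTEdgeMetricGen_of_isFTMetricGen_of_bipartite {V : Type*}
    (G : SimpleGraph V) (hconn : G.Connected) (hbip : G.Colorable 2)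
    (F : Set V) (hF : isFTMetricGen G F) :
    isFTEdgeMetricGen G F := by
  obtain ⟨C⟩ := hbip
  exact ⟨gen_to_edge hconn C hF.1, fun u hu => gen_to_edge hconn C (hF.2 u hu)⟩
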